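/- arXiv:1608.03033 — 2 statements merged into one kernel-verified Lean document; each statement's English description precedes it below -/
import Mathlib

section
/- Let w: ℝ → ℝ be continuously differentiable and satisfy (σ²/2)w'(z) + π(w(z)) − h(z) = γ for all z, where π is strictly decreasing with π(w) → +∞ as w → −∞ and π(w) → −∞ as w → +∞, h(z) → +∞ as z → +∞, and w'(z)/h(z) → 0 as z → +∞. Then w(z) → −∞ as z → +∞. -/
/-- Let w ∈ C¹(ℝ) satisfy (σ²/2)w'(z) + π(w(z)) − h(z) = γ with π
continuous, strictly decreasing, π → +∞ at −∞ and π → −∞ at +∞, h → +∞ at +∞, and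
w'(z)/h(z) → 0 as z → +∞.  Then w(z) → −∞ as z → +∞. -/
theorem stmt_10 (σ γ : ℝ) (hσ : 0 < σ)
    (h : ℝ → ℝ) (hnn : ∀ z, 0 ≤ h z)
    (hh : Filter.Tendsto h Filter.atTop Filter.atTop)
    (π : ℝ → ℝ) (hπcont : Continuous π) (hπanti : StrictAnti π)
    (hπbot : Filter.Tendsto π Filter.atBot Filter.atTop)
    (hπtop : Filter.Tendsto π Filter.atTop Filter.atBot)
    (w w' : ℝ → ℝ)
    (hw : ∀ z, HasDerivAt w (w' z) z) (hw'cont : Continuous w')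
    (hode : ∀ z : ℝ, σ^2 / 2 * w' z + π (w z) - h z = γ)
    (hratio : Filter.Tendsto (fun z => w' z / h z) Filter.atTop (nhds 0)) :
    Filter.Tendsto w Filter.atTop Filter.atBot := by
  have hσ2 : (0:ℝ) < σ^2 := by positivity
  have habs : Filter.Tendsto (fun z => |w' z / h z|) Filter.atTop (nhds 0) := by
    simpa using hratio.abs
  have hsmall : ∀ᶠ z in Filter.atTop, |w' z / h z| < 1 / σ^2 :=
    habs.eventually_lt_const (by positivity)
  have hbig : ∀ᶠ z in Filter.atTop, (1:ℝ) ≤ h z := hh.eventually_ge_atTop 1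
  have h1 : ∀ᶠ z in Filter.atTop, γ + h z / 2 ≤ π (w z) := by
    filter_upwards [hsmall, hbig] with z hz1 hz2
    have hhz : (0:ℝ) < h z := lt_of_lt_of_le one_pos hz2
    have hwz : |w' z| ≤ (1 / σ^2) * h z := by
      have : |w' z / h z| ≤ 1 / σ^2 := le_of_lt hz1
      rw [abs_div, abs_of_pos hhz, div_le_iff₀ hhz] at this
      linarith
    have hwz' : σ^2 / 2 * w' z ≤ h z / 2 := by
      have h2 : w' z ≤ (1 / σ^2) * h z := le_of_abs_le hwz
      have h3 := mul_le_mul_of_nonneg_left h2 (le_of_lt (by positivity : (0:ℝ) < σ^2 / 2))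
      calc σ^2 / 2 * w' z ≤ σ^2 / 2 * ((1 / σ^2) * h z) := h3
        _ = h z / 2 := by field_simp
    linarith [hode z]
  have hπw : Filter.Tendsto (fun z => π (w z)) Filter.atTop Filter.atTop := by
    refine Filter.tendsto_atTop_mono' _ h1 ?_
    exact Filter.tendsto_atTop_add_const_left _ γ (hh.atTop_div_const (by norm_num))
  rw [Filter.tendsto_atBot]
  intro b
  filter_upwards [hπw.eventually_gt_atTop (π b)] with z hz
  exact le_of_lt (hπanti.lt_iff_gt.mp hz)
end

section
/- Let w: (0,∞) → ℝ be twice continuously differentiable, tending to −∞ at +∞, and satisfy (σ²/2)w'(z) + π(w(z)) − h(z) = γ on (0,∞), where π is continuously differentiable with π' < 0 and h is continuously differentiable with h' > 0 on (0,∞) and h strictly increasing on (0,∞). Then w'(z) < 0 for all z > 0. -/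
open Filter Set

private lemma ev_right (f : ℝ → ℝ) (f' x : ℝ) (hf : HasDerivAt f f' x) (h0 : 0 < f') :
    ∀ᶠ z in nhdsWithin x (Set.Ioi x), f x < f z := by
  rw [hasDerivAt_iff_tendsto_slope] at hf
  have h1 : ∀ᶠ z in nhdsWithin x {x}ᶜ, 0 < slope f x z := hf.eventually (eventually_gt_nhds h0)
  have h2 : nhdsWithin x (Set.Ioi x) ≤ nhdsWithin x {x}ᶜ :=
    nhdsWithin_mono x (fun z hz => ne_of_gt hz)
  filter_upwards [h2 h1, self_mem_nhdsWithin] with z hz hz'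
  rw [slope_def_field] at hz
  rcases div_pos_iff.mp hz with ⟨h3, _⟩ | ⟨_, h4⟩
  · linarith
  · simp only [Set.mem_Ioi] at hz'; linarith

private lemma ev_left (f : ℝ → ℝ) (f' x : ℝ) (hf : HasDerivAt f f' x) (h0 : 0 < f') :
    ∀ᶠ z in nhdsWithin x (Set.Iio x), f z < f x := by
  rw [hasDerivAt_iff_tendsto_slope] at hf
  have h1 : ∀ᶠ z in nhdsWithin x {x}ᶜ, 0 < slope f x z := hf.eventually (eventually_gt_nhds h0)
  have h2 : nhdsWithin x (Set.Iio x) ≤ nhdsWithin x {x}ᶜ :=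
    nhdsWithin_mono x (fun z hz => ne_of_lt hz)
  filter_upwards [h2 h1, self_mem_nhdsWithin] with z hz hz'
  rw [slope_def_field] at hz
  rcases div_pos_iff.mp hz with ⟨_, h3⟩ | ⟨h4, _⟩
  · simp only [Set.mem_Iio] at hz'; linarith
  · linarith

/-- Let w be C² on (0,∞) with w(z) → −∞ as z → ∞, satisfying
(σ²/2)w'(z) + π(w(z)) − h(z) = γ on (0,∞), with π ∈ C¹, π' < 0, and h ∈ C¹ on (0,∞)
with h' > 0 (so h strictly increasing on (0,∞)).  Then w'(z) < 0 for all z > 0. -/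
theorem stmt_11 (σ γ : ℝ) (hσ : 0 < σ)
    (π π' : ℝ → ℝ)
    (hπ : ∀ x : ℝ, HasDerivAt π (π' x) x) (hπ'cont : Continuous π')
    (hπ'neg : ∀ x : ℝ, π' x < 0)
    (h h' : ℝ → ℝ)
    (hh : ∀ z : ℝ, 0 < z → HasDerivAt h (h' z) z)
    (hh'cont : ContinuousOn h' (Set.Ioi (0:ℝ)))
    (hh'pos : ∀ z : ℝ, 0 < z → 0 < h' z)
    (hhmono : StrictMonoOn h (Set.Ioi (0:ℝ)))
    (w w' w'' : ℝ → ℝ)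
    (hw : ∀ z : ℝ, 0 < z → HasDerivAt w (w' z) z)
    (hw' : ∀ z : ℝ, 0 < z → HasDerivAt w' (w'' z) z)
    (hw''cont : ContinuousOn w'' (Set.Ioi (0:ℝ)))
    (hwbot : Filter.Tendsto w Filter.atTop Filter.atBot)
    (hode : ∀ z : ℝ, 0 < z → σ^2 / 2 * w' z + π (w z) - h z = γ) :
    ∀ z : ℝ, 0 < z → w' z < 0 := by
  have hσ2 : (0:ℝ) < σ^2/2 := by positivity
  -- second-derivative identity
  have key : ∀ z : ℝ, 0 < z → σ^2/2 * w'' z = h' z - π' (w z) * w' z := by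
    intro z hz
    have hg : HasDerivAt (fun t => γ + h t - π (w t)) (h' z - π' (w z) * w' z) z := by
      have h1 := ((hh z hz).sub ((hπ (w z)).comp z (hw z hz))).const_add γ
      simpa [Function.comp, add_sub_assoc] using h1
    have heq : (fun t => σ^2/2 * w' t) =ᶠ[nhds z] (fun t => γ + h t - π (w t)) := by
      filter_upwards [isOpen_Ioi.mem_nhds hz] with t ht
      have := hode t ht
      linarith
    have h1 : HasDerivAt (fun t => σ^2/2 * w' t) (h' z - π' (w z) * w' z) z :=
      hg.congr_of_eventuallyEq heq
    have h2 : HasDerivAt (fun t => σ^2/2 * w' t) (σ^2/2 * w'' z) z := (hw' z hz).const_mul _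
    exact h2.unique h1
  -- if w' z = 0 then w'' z > 0
  have hpos : ∀ z : ℝ, 0 < z → w' z = 0 → 0 < w'' z := by
    intro z hz h0
    have := key z hz
    rw [h0] at this
    have hh' := hh'pos z hz
    nlinarith
  intro z₁ hz₁
  by_contra hcon
  push_neg at hcon
  -- Step A: find z₂ > 0 with w' z₂ > 0
  obtain ⟨z₂, hz₂0, hz₂pos⟩ : ∃ z₂ : ℝ, 0 < z₂ ∧ 0 < w' z₂ := by
    rcases lt_or_eq_of_le hcon with hlt | heq
    · exact ⟨z₁, hz₁, hlt⟩
    · have hw'' := hpos z₁ hz₁ heq.symm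
      have hev := ev_right w' (w'' z₁) z₁ (hw' z₁ hz₁) hw''
      obtain ⟨z₂, hz₂, hz₂'⟩ := (hev.and self_mem_nhdsWithin).exists
      exact ⟨z₂, lt_trans hz₁ hz₂', by linarith⟩
  -- continuity of w' on Ioi 0
  have hw'cont : ∀ z : ℝ, 0 < z → ContinuousAt w' z := fun z hz => (hw' z hz).continuousAt
  -- the set T
  set T : Set ℝ := {z | z₂ ≤ z ∧ w' z ≤ 0} with hT
  by_cases hTne : T.Nonempty
  · -- first hitting time
    have hbdd : BddBelow T := ⟨z₂, fun t ht => ht.1⟩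
    set z₃ := sInf T with hz₃def
    have hz₂le : z₂ ≤ z₃ := le_csInf hTne (fun t ht => ht.1)
    have hz₃0 : 0 < z₃ := lt_of_lt_of_le hz₂0 hz₂le
    -- w' z₃ ≤ 0
    have h3le : w' z₃ ≤ 0 := by
      by_contra hc
      push_neg at hc
      have hcont := hw'cont z₃ hz₃0
      have hev : ∀ᶠ t in nhds z₃, 0 < w' t := hcont.eventually (eventually_gt_nhds hc)
      rw [Metric.eventually_nhds_iff] at hev
      obtain ⟨δ, hδ, hball⟩ := hev
      have hlb : z₃ + δ ≤ z₃ := by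
        apply le_csInf hTne
        intro t ht
        by_contra hc2
        push_neg at hc2
        have ht3 : z₃ ≤ t := csInf_le hbdd ht
        have : dist t z₃ < δ := by
          rw [Real.dist_eq, abs_of_nonneg (by linarith)]; linarith
        exact absurd (hball this) (not_lt.mpr ht.2)
      linarith
    have hz₂lt : z₂ < z₃ := lt_of_le_of_ne hz₂le (fun he => by rw [← he] at h3le; linarith)
    -- w' > 0 on [z₂, z₃)
    have hposint : ∀ t : ℝ, z₂ ≤ t → t < z₃ → 0 < w' t := by
      intro t ht1 ht2
      by_contra hc
      push_neg at hc
      exact absurd (csInf_le hbdd ⟨ht1, hc⟩) (not_le.mpr ht2)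
    -- w' z₃ ≥ 0 via left limit
    have h3ge : 0 ≤ w' z₃ := by
      have htend : Tendsto w' (nhdsWithin z₃ (Set.Iio z₃)) (nhds (w' z₃)) :=
        ((hw'cont z₃ hz₃0).tendsto).mono_left nhdsWithin_le_nhds
      apply ge_of_tendsto htend
      have hmem : Set.Ioo z₂ z₃ ∈ nhdsWithin z₃ (Set.Iio z₃) :=
        mem_nhdsWithin.mpr ⟨Set.Ioi z₂, isOpen_Ioi, hz₂lt, by
          intro t ⟨ht1, ht2⟩; exact ⟨ht1, ht2⟩⟩
      filter_upwards [hmem] with t ⟨ht1, ht2⟩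
      exact le_of_lt (hposint t (le_of_lt ht1) ht2)
    have h30 : w' z₃ = 0 := le_antisymm h3le h3ge
    -- contradiction via left slope
    have hw''3 : 0 < w'' z₃ := hpos z₃ hz₃0 h30
    have hev := ev_left w' (w'' z₃) z₃ (hw' z₃ hz₃0) hw''3
    have hmem : Set.Ioo z₂ z₃ ∈ nhdsWithin z₃ (Set.Iio z₃) :=
      mem_nhdsWithin.mpr ⟨Set.Ioi z₂, isOpen_Ioi, hz₂lt, by
        intro t ⟨ht1, ht2⟩; exact ⟨ht1, ht2⟩⟩
    obtain ⟨t, ht1, ht2, ht3⟩ := (hev.and hmem).exists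
    have := hposint t (le_of_lt ht2) ht3
    rw [h30] at ht1
    linarith
  · -- T empty: w' > 0 on [z₂,∞), w increasing, contradiction with w → -∞
    rw [Set.not_nonempty_iff_eq_empty] at hTne
    have hallpos : ∀ t : ℝ, z₂ ≤ t → 0 < w' t := by
      intro t ht
      by_contra hc
      push_neg at hc
      have : t ∈ T := ⟨ht, hc⟩
      rw [hTne] at this
      exact this
    have hmono : StrictMonoOn w (Set.Ici z₂) := by
      apply strictMonoOn_of_deriv_pos (convex_Ici z₂)
      · intro t ht
        exact (hw t (lt_of_lt_of_le hz₂0 ht)).continuousAt.continuousWithinAt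
      · intro t ht
        rw [interior_Ici] at ht
        have htpos : 0 < t := lt_trans hz₂0 ht
        rw [(hw t htpos).deriv]
        exact hallpos t (le_of_lt ht)
    obtain ⟨t, ht1, ht2⟩ := ((hwbot.eventually (eventually_lt_atBot (w z₂))).and
      (eventually_gt_atTop z₂)).exists
    have := hmono (Set.self_mem_Ici) (le_of_lt ht2) ht2
    linarith
end
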